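/- Let κ be a regular cardinal with κ^{<κ} = κ. If GMP_{κ⁺⁺}(κ⁺⁺) holds, then the weak Kurepa Hypothesis wKH(κ⁺) fails, i.e., every tree of height κ⁺ and cardinality κ⁺ has at most κ⁺ many cofinal branches. -/

import Mathlib

/-!
Formalization over the ZFC universe `ZFSet`.  We view `H(θ)` as the collection
of ZF-sets whose transitive closure has cardinality `< θ`, and `M ≺ H(θ)` as
elementarity for the first-order language with a single binary relation
(interpreted as membership).  Cardinals and ordinals of the set-theoretic
universe are rendered as `Cardinal.{1}` and `Ordinal.{1}`, matching the
cardinalities and order types of (collections of) elements of `ZFSet : Type 1`.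
-/

open FirstOrder Cardinal

/-- A collection of ZF-sets viewed as a structure in the first-order language
with one binary relation (`FirstOrder.Language.graph`), interpreting the
relation symbol as membership. -/
def memStructure (A : Set ZFSet.{0}) : Language.graph.Structure A where
  funMap := fun f _ => f.elim
  RelMap := fun {n} r => match n, r with
    | 2, .adj => fun x => ((x 0 : ZFSet) ∈ (x 1 : ZFSet))

/-- `φ` is realized by the assignment `v` in the membership structure on `A`. -/
def realizeIn (A : Set ZFSet.{0}) {n : ℕ} (φ : Language.graph.Formula (Fin n))
    (v : Fin n → A) : Prop :=
  letI := memStructure A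
  φ.Realize v

/-- `M ≺ N`: `M` is an elementary submodel of `N` with respect to the
membership relation. -/
def IsElemSubmodel (M N : Set ZFSet.{0}) : Prop :=
  ∃ h : M ⊆ N, ∀ (n : ℕ) (φ : Language.graph.Formula (Fin n)) (v : Fin n → M),
    realizeIn N φ (fun i => Set.inclusion h (v i)) ↔ realizeIn M φ v

/-- `H(θ)`: the collection of ZF-sets whose transitive closure has cardinality
less than `θ`. -/
def HSet (θ : Cardinal.{1}) : Set ZFSet.{0} :=
  { x | #{ y : ZFSet.{0} | Relation.TransGen (· ∈ ·) y x } < θ }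

/-- `d` is `(κ⁺, M)`-approximated: `d ∩ z ∈ M` for every `z ∈ M` with
`z ⊆ M` and `|z| ≤ κ`. -/
def IsApproximated (κ : Cardinal.{1}) (M : Set ZFSet.{0}) (d : ZFSet.{0}) : Prop :=
  ∀ z : ZFSet.{0}, z ∈ M → z.toSet ⊆ M → #↥z.toSet ≤ κ → d ∩ z ∈ M

/-- `d` is `M`-guessed: there is `e ∈ M` with `e ∩ M = d ∩ M`. -/
def IsGuessed (M : Set ZFSet.{0}) (d : ZFSet.{0}) : Prop :=
  ∃ e ∈ M, e.toSet ∩ M = d.toSet ∩ M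

/-- `M` is a `κ⁺`-guessing model (as a submodel of `H(θ)`): an elementary
submodel of `H(θ)` of cardinality `κ⁺`, closed under sequences of length `< κ`,
in which every `(κ⁺, M)`-approximated subset of an element of `M` is
`M`-guessed. -/
structure IsGuessingModel (κ θ : Cardinal.{1}) (M : Set ZFSet.{0}) : Prop where
  elem : IsElemSubmodel M (HSet θ)
  card : #↥M = Order.succ κ
  closed : ∀ z : ZFSet.{0}, z.toSet ⊆ M → #↥z.toSet < κ → z ∈ M
  guess : ∀ x ∈ M, ∀ d : ZFSet.{0}, d ⊆ x → IsApproximated κ M d → IsGuessed M d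

/-- `P_μ(X)`: subsets of `X` of cardinality less than `μ`. -/
def smallSubsets (μ : Cardinal.{1}) (X : Set ZFSet.{0}) : Set (Set ZFSet.{0}) :=
  { Y | Y ⊆ X ∧ #↥Y < μ }

/-- `C` is club in `P_μ(X)`: `⊆`-cofinal and closed under unions of
`⊆`-increasing chains of length less than `μ`. -/
def IsClubIn (μ : Cardinal.{1}) (X : Set ZFSet.{0}) (C : Set (Set ZFSet.{0})) : Prop :=
  C ⊆ smallSubsets μ X ∧
  (∀ a ∈ smallSubsets μ X, ∃ c ∈ C, a ⊆ c) ∧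
  ∀ δ : Ordinal.{1}, 0 < δ → δ.card < μ →
    ∀ f : Ordinal.{1} → Set ZFSet.{0},
      (∀ i < δ, f i ∈ C) → (∀ i j, i ≤ j → j < δ → f i ⊆ f j) →
      (⋃ i ∈ Set.Iio δ, f i) ∈ C

/-- `S` is stationary in `P_μ(X)`: `S` meets every club subset of `P_μ(X)`. -/
def IsStationaryIn (μ : Cardinal.{1}) (X : Set ZFSet.{0}) (S : Set (Set ZFSet.{0})) : Prop :=
  S ⊆ smallSubsets μ X ∧ ∀ C, IsClubIn μ X C → (S ∩ C).Nonempty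

/-- The guessing model principle `GMP_{κ⁺⁺}(θ)`: the set of
`M ∈ P_{κ⁺⁺}(H(θ))` that are `κ⁺`-guessing models is stationary in
`P_{κ⁺⁺}(H(θ))`. -/
def GMP (κ θ : Cardinal.{1}) : Prop :=
  IsStationaryIn (Order.succ (Order.succ κ)) (HSet θ)
    { M | M ∈ smallSubsets (Order.succ (Order.succ κ)) (HSet θ) ∧ IsGuessingModel κ θ M }

/-- A von Neumann ordinal: a transitive ZF-set linearly ordered by
membership. -/
def IsVonNeumannOrdinal (x : ZFSet.{0}) : Prop :=
  (∀ y ∈ x, y ⊆ x) ∧ ∀ y ∈ x, ∀ z ∈ x, y ∈ z ∨ y = z ∨ z ∈ y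

/-- The ordinal coded by a (von Neumann ordinal) ZF-set: the order type of
membership on it. -/
noncomputable def ordOf (x : ZFSet.{0}) : Ordinal.{1} :=
  letI := Classical.dec (IsWellOrder ↥x.toSet fun a b => (a : ZFSet) ∈ (b : ZFSet))
  if h : IsWellOrder ↥x.toSet (fun a b => (a : ZFSet) ∈ (b : ZFSet)) then
    @Ordinal.type ↥x.toSet (fun a b => (a : ZFSet) ∈ (b : ZFSet)) h
  else 0

/-- A tree coded in the ZF universe: a set of nodes together with a set of
(Kuratowski) pairs coding a strict partial order in which the set of
predecessors of every node is well-ordered. -/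
structure ZFTree where
  nodes : ZFSet.{0}
  rel : ZFSet.{0}
  rel_sub : ∀ p ∈ rel, ∃ a ∈ nodes, ∃ b ∈ nodes, p = ZFSet.pair a b
  lt_irrefl : ∀ a, ZFSet.pair a a ∉ rel
  lt_trans : ∀ a b c, ZFSet.pair a b ∈ rel → ZFSet.pair b c ∈ rel → ZFSet.pair a c ∈ rel
  pred_wellOrder : ∀ t ∈ nodes,
    IsWellOrder {s : ZFSet.{0} // ZFSet.pair s t ∈ rel} fun a b => ZFSet.pair a.1 b.1 ∈ rel

namespace ZFTree

/-- The strict order relation of the tree. -/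
def Lt (T : ZFTree) (a b : ZFSet.{0}) : Prop := ZFSet.pair a b ∈ T.rel

/-- The height of a node: the order type of its set of predecessors. -/
noncomputable def nodeHeight (T : ZFTree) (t : ZFSet.{0}) : Ordinal.{1} :=
  letI := Classical.dec (IsWellOrder {s : ZFSet.{0} // T.Lt s t} fun a b => T.Lt a.1 b.1)
  if h : IsWellOrder {s : ZFSet.{0} // T.Lt s t} fun a b => T.Lt a.1 b.1 then
    @Ordinal.type {s : ZFSet.{0} // T.Lt s t} (fun a b => T.Lt a.1 b.1) h
  else 0

/-- The `α`-th level of the tree: nodes of height `α`. -/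
def level (T : ZFTree) (α : Ordinal.{1}) : Set ZFSet.{0} :=
  { t ∈ T.nodes.toSet | T.nodeHeight t = α }

/-- The height of the tree: the least ordinal whose level is empty. -/
noncomputable def height (T : ZFTree) : Ordinal.{1} :=
  sInf { α | T.level α = ∅ }

/-- A cofinal branch: a chain containing nodes of every height below the
height of the tree. -/
def IsCofinalBranch (T : ZFTree) (B : Set ZFSet.{0}) : Prop :=
  B ⊆ T.nodes.toSet ∧
  (∀ a ∈ B, ∀ b ∈ B, a ≠ b → T.Lt a b ∨ T.Lt b a) ∧
  ∀ α < T.height, ∃ b ∈ B, T.nodeHeight b = α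

/-- A `λ`-tree: a tree of height `λ` all of whose levels have cardinality
less than `λ`. -/
def IsLambdaTree (lam : Cardinal.{1}) (T : ZFTree) : Prop :=
  T.height = lam.ord ∧ ∀ α : Ordinal.{1}, #↥(T.level α) < lam

end ZFTree


/-! ### Auxiliary machinery for the main theorem -/

section Aux

open FirstOrder Language

lemma ZFSet.mem_toSet (a u : ZFSet.{0}) : a ∈ u.toSet ↔ a ∈ u := Iff.rfl

lemma ZFSet.toSet_injective : Function.Injective ZFSet.toSet.{0} := SetLike.coe_injective

/-- bounded formula with free vars `z = inl 0`, `p = inl 1` and two bound vars `w = &0`, `s = &1`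
saying `s ∈ w ↔ (s ∈ z ∧ s ∈ p)`. -/
def interBody : Language.graph.BoundedFormula (Fin 2) 2 :=
  (Relations.boundedFormula₂ adj (&1) (&0)).iff
    ((Relations.boundedFormula₂ adj (&1) (Term.var (Sum.inl 0))) ⊓
     (Relations.boundedFormula₂ adj (&1) (Term.var (Sum.inl 1))))

/-- `∃ w ∀ s, s ∈ w ↔ (s ∈ z ∧ s ∈ p)` -/
def interEx : Language.graph.Formula (Fin 2) := interBody.all.ex

/-- `∀ s, s ∈ w ↔ (s ∈ z ∧ s ∈ p)` with free `z p w` -/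
def interPsi : Language.graph.Formula (Fin 3) :=
  ((Relations.boundedFormula₂ adj (&0) (Term.var (Sum.inl 2))).iff
    ((Relations.boundedFormula₂ adj (&0) (Term.var (Sum.inl 0))) ⊓
     (Relations.boundedFormula₂ adj (&0) (Term.var (Sum.inl 1))))).all

lemma realize_interEx (A : Set ZFSet.{0}) (v : Fin 2 → A) :
    realizeIn A interEx v ↔
      ∃ w : A, ∀ s : A, ((s : ZFSet) ∈ (w : ZFSet) ↔
        (s : ZFSet) ∈ (v 0 : ZFSet) ∧ (s : ZFSet) ∈ (v 1 : ZFSet)) := by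
  letI := memStructure A
  show Formula.Realize interEx v ↔ _
  rw [Formula.Realize, interEx]
  simp only [BoundedFormula.realize_ex, BoundedFormula.realize_all, interBody,
    BoundedFormula.realize_iff, BoundedFormula.realize_inf, BoundedFormula.realize_rel₂,
    Term.realize_var, Sum.elim_inl, Sum.elim_inr]
  constructor
  · rintro ⟨w, hw⟩
    exact ⟨w, fun s => hw s⟩
  · rintro ⟨w, hw⟩
    exact ⟨w, fun s => hw s⟩

lemma realize_interPsi (A : Set ZFSet.{0}) (v : Fin 3 → A) :
    realizeIn A interPsi v ↔
      ∀ s : A, ((s : ZFSet) ∈ (v 2 : ZFSet) ↔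
        (s : ZFSet) ∈ (v 0 : ZFSet) ∧ (s : ZFSet) ∈ (v 1 : ZFSet)) := by
  letI := memStructure A
  show Formula.Realize interPsi v ↔ _
  rw [Formula.Realize, interPsi]
  simp only [BoundedFormula.realize_all, BoundedFormula.realize_iff, BoundedFormula.realize_inf,
    BoundedFormula.realize_rel₂, Term.realize_var, Sum.elim_inl, Sum.elim_inr]
  constructor
  · intro h s; exact h s
  · intro h s; exact h s

/-- transitive closure is monotone under elementwise subset -/
lemma tc_mono {x y : ZFSet.{0}} (h : ∀ u, u ∈ x → u ∈ y) :
    { w : ZFSet.{0} | Relation.TransGen (· ∈ ·) w x } ⊆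
      { w | Relation.TransGen (· ∈ ·) w y } := by
  intro w hw
  obtain ⟨b, hb1, hb2⟩ := Relation.TransGen.tail'_iff.mp hw
  exact Relation.TransGen.tail' hb1 (h _ hb2)

lemma mem_HSet_of_mem {θ : Cardinal.{1}} {x y : ZFSet.{0}} (hx : x ∈ HSet θ) (hyx : y ∈ x) :
    y ∈ HSet θ := by
  refine lt_of_le_of_lt (Cardinal.mk_le_mk_of_subset ?_) hx
  intro w hw
  exact Relation.TransGen.tail hw hyx

lemma mem_HSet_of_subset {θ : Cardinal.{1}} {x y : ZFSet.{0}} (h : ∀ u, u ∈ x → u ∈ y)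
    (hy : y ∈ HSet θ) : x ∈ HSet θ :=
  lt_of_le_of_lt (Cardinal.mk_le_mk_of_subset (tc_mono h)) hy

lemma inter_mem_HSet {θ : Cardinal.{1}} {z : ZFSet.{0}} (p : ZFSet.{0}) (hz : z ∈ HSet θ) :
    z ∩ p ∈ HSet θ :=
  mem_HSet_of_subset (fun _ hu => (ZFSet.mem_inter.mp hu).1) hz

lemma mem_of_transGen {x w : ZFSet.{0}} (htr : ∀ y ∈ x, ∀ z ∈ y, z ∈ x)
    (h : Relation.TransGen (· ∈ ·) w x) : w ∈ x := by
  induction h using Relation.TransGen.head_induction_on with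
  | single h => exact h
  | head h₁ _ ih => exact htr _ ih _ h₁

lemma mem_HSet_of_transitive {θ : Cardinal.{1}} {x : ZFSet.{0}}
    (htr : ∀ y ∈ x, ∀ z ∈ y, z ∈ x) (hcard : #↥x.toSet < θ) : x ∈ HSet θ := by
  have he : { w : ZFSet.{0} | Relation.TransGen (· ∈ ·) w x } = x.toSet := by
    ext w
    exact ⟨fun hw => mem_of_transGen htr hw, fun hw => Relation.TransGen.single hw⟩
  show #↥{ w : ZFSet.{0} | Relation.TransGen (· ∈ ·) w x } < θ
  rw [he]; exact hcard

/-- Any elementary submodel of an `H(θ)` is closed under (ZF-)intersections. -/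
lemma inter_mem_of_elem {θ : Cardinal.{1}} {M : Set ZFSet.{0}}
    (hM : IsElemSubmodel M (HSet θ)) {z p : ZFSet.{0}} (hz : z ∈ M) (hp : p ∈ M) :
    z ∩ p ∈ M := by
  obtain ⟨hsub, helem⟩ := hM
  have hzH : z ∈ HSet θ := hsub hz
  have hpH : p ∈ HSet θ := hsub hp
  set v : Fin 2 → M := ![⟨z, hz⟩, ⟨p, hp⟩] with hv
  have hincl : (fun i => Set.inclusion hsub (v i)) = ![(⟨z, hzH⟩ : HSet θ), ⟨p, hpH⟩] := by
    funext i
    fin_cases i <;> rfl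
  have h1 : realizeIn (HSet θ) interEx (fun i => Set.inclusion hsub (v i)) := by
    rw [hincl, realize_interEx]
    refine ⟨⟨z ∩ p, inter_mem_HSet p hzH⟩, fun s => ?_⟩
    simpa using ZFSet.mem_inter
  have h2 := (helem 2 interEx v).mp h1
  rw [realize_interEx] at h2
  obtain ⟨w, hw⟩ := h2
  have h3 : realizeIn M interPsi ![⟨z, hz⟩, ⟨p, hp⟩, w] := by
    rw [realize_interPsi]
    intro s; simpa [hv] using hw s
  have h4 := (helem 3 interPsi ![⟨z, hz⟩, ⟨p, hp⟩, w]).mpr h3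
  have hincl3 : (fun i => Set.inclusion hsub ((![⟨z, hz⟩, ⟨p, hp⟩, w] : Fin 3 → M) i)) =
      ![(⟨z, hzH⟩ : HSet θ), ⟨p, hpH⟩, ⟨(w : ZFSet), hsub w.2⟩] := by
    funext i; fin_cases i <;> rfl
  rw [hincl3, realize_interPsi] at h4
  have hzpw : z ∩ p = (w : ZFSet) := by
    apply ZFSet.ext
    intro u
    constructor
    · intro hu
      have huz : u ∈ z := (ZFSet.mem_inter.mp hu).1
      have huH : u ∈ HSet θ := mem_HSet_of_mem hzH huz
      exact ((h4 ⟨u, huH⟩).mpr (by simpa using ZFSet.mem_inter.mp hu))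
    · intro hu
      have huH : u ∈ HSet θ := mem_HSet_of_mem (hsub w.2) hu
      have := (h4 ⟨u, huH⟩).mp (by simpa using hu)
      simp only [Matrix.cons_val_zero, Matrix.cons_val_one, Matrix.head_cons] at this
      exact ZFSet.mem_inter.mpr this
  rw [hzpw]
  exact w.2

/-! von Neumann ordinals -/

noncomputable def vn (o : Ordinal.{0}) : ZFSet.{0} :=
  ZFSet.range.{0,0} (fun i : o.ToType => vn ((Ordinal.ToType.mk (o := o)).symm i).1)
termination_by o
decreasing_by exact ((Ordinal.ToType.mk (o := o)).symm i).2

lemma mem_vn {x : ZFSet.{0}} {o : Ordinal.{0}} :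
    x ∈ vn o ↔ ∃ o' < o, x = vn o' := by
  rw [vn, ZFSet.mem_range]
  constructor
  · rintro ⟨i, rfl⟩
    exact ⟨_, ((Ordinal.ToType.mk (o := o)).symm i).2, rfl⟩
  · rintro ⟨o', ho', rfl⟩
    refine ⟨Ordinal.ToType.mk (o := o) ⟨o', ho'⟩, ?_⟩
    simp

lemma vn_mem_vn {o' o : Ordinal.{0}} (h : o' < o) : vn o' ∈ vn o :=
  mem_vn.mpr ⟨o', h, rfl⟩

lemma vn_injective : Function.Injective vn := by
  intro a b hab
  by_contra hne
  rcases lt_or_gt_of_ne hne with h | h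
  · have := vn_mem_vn h; rw [hab] at this; exact ZFSet.mem_irrefl _ this
  · have := vn_mem_vn h; rw [hab] at this; exact ZFSet.mem_irrefl _ this

lemma vn_transitive {o : Ordinal.{0}} {y : ZFSet.{0}} (hy : y ∈ vn o) : ∀ z ∈ y, z ∈ vn o := by
  obtain ⟨o', ho', rfl⟩ := mem_vn.mp hy
  intro z hz
  obtain ⟨o'', ho'', rfl⟩ := mem_vn.mp hz
  exact vn_mem_vn (ho''.trans ho')

lemma toSet_vn (o : Ordinal.{0}) : (vn o).toSet = vn '' (Set.Iio o) := by
  ext x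
  simp only [ZFSet.mem_toSet, Set.mem_image, Set.mem_Iio]
  rw [mem_vn]
  exact ⟨fun ⟨o', h, e⟩ => ⟨o', h, e.symm⟩, fun ⟨o', h, e⟩ => ⟨o', h, e.symm⟩⟩

lemma mk_toSet_vn (o : Ordinal.{0}) : #↥(vn o).toSet = Cardinal.lift.{1} o.card := by
  rw [toSet_vn, Cardinal.mk_image_eq vn_injective, Ordinal.mk_Iio_ordinal]

/-! tree lemmas -/

namespace ZFTree

variable {T : ZFTree}

lemma mem_nodes_of_lt_left {a b : ZFSet.{0}} (h : T.Lt a b) : a ∈ T.nodes := by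
  obtain ⟨a', ha', b', hb', he⟩ := T.rel_sub _ h
  obtain ⟨rfl, rfl⟩ := ZFSet.pair_injective he
  exact ha'

lemma predWO {t : ZFSet.{0}} (ht : t ∈ T.nodes) :
    IsWellOrder {s : ZFSet.{0} // T.Lt s t} fun a b => T.Lt a.1 b.1 :=
  T.pred_wellOrder t ht

lemma nodeHeight_eq {t : ZFSet.{0}} (ht : t ∈ T.nodes) :
    T.nodeHeight t = @Ordinal.type {s : ZFSet.{0} // T.Lt s t}
      (fun a b => T.Lt a.1 b.1) (predWO ht) := by
  rw [nodeHeight, dif_pos (predWO ht)]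

/-- the inclusion of predecessors of `s` into predecessors of `t` is principal with top `s` -/
noncomputable def predSeg {s t : ZFSet.{0}} (hst : T.Lt s t) :
    @PrincipalSeg {u : ZFSet.{0} // T.Lt u s} {u : ZFSet.{0} // T.Lt u t}
      (fun a b => T.Lt a.1 b.1) (fun a b => T.Lt a.1 b.1) where
  toFun u := ⟨u.1, T.lt_trans _ _ _ u.2 hst⟩
  inj' := by rintro ⟨a, ha⟩ ⟨b, hb⟩ he; simpa using congrArg Subtype.val he
  map_rel_iff' := Iff.rfl
  top := ⟨s, hst⟩
  mem_range_iff_rel' := by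
    rintro ⟨b, hb⟩
    constructor
    · rintro ⟨⟨a, ha⟩, he⟩
      have : a = b := congrArg Subtype.val he
      subst this; exact ha
    · intro h; exact ⟨⟨b, h⟩, rfl⟩

lemma height_eq_typein {s t : ZFSet.{0}} (ht : t ∈ T.nodes) (hst : T.Lt s t) :
    T.nodeHeight s =
      @Ordinal.typein {u : ZFSet.{0} // T.Lt u t} (fun a b => T.Lt a.1 b.1) (predWO ht)
        ⟨s, hst⟩ := by
  letI := predWO ht
  letI := predWO (mem_nodes_of_lt_left hst)
  rw [nodeHeight_eq (mem_nodes_of_lt_left hst)]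
  have := Ordinal.typein_top (predSeg (T := T) hst)
  rw [← this]
  rfl

lemma nodeHeight_lt_of_lt {s t : ZFSet.{0}} (ht : t ∈ T.nodes) (hst : T.Lt s t) :
    T.nodeHeight s < T.nodeHeight t := by
  letI := predWO ht
  rw [height_eq_typein ht hst, nodeHeight_eq ht]
  exact Ordinal.typein_lt_type _ _

lemma exists_pred_height {t : ZFSet.{0}} (ht : t ∈ T.nodes) {β : Ordinal.{1}}
    (hβ : β < T.nodeHeight t) : ∃ s, T.Lt s t ∧ T.nodeHeight s = β := by
  letI := predWO ht
  rw [nodeHeight_eq ht] at hβ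
  obtain ⟨⟨s, hs⟩, hty⟩ := Ordinal.typein_surj _ hβ
  exact ⟨s, hs, by rw [height_eq_typein ht hs, hty]⟩

lemma nodeHeight_lt_height {t : ZFSet.{0}} (ht : t ∈ T.nodes) :
    T.nodeHeight t < T.height := by
  have hne : { α | T.level α = ∅ }.Nonempty := by
    refine ⟨Order.succ (⨆ u : ↥T.nodes.toSet, T.nodeHeight u), ?_⟩
    ext x
    simp only [level, Set.mem_setOf_eq, Set.mem_empty_iff_false, iff_false, not_and]
    intro hx hh
    have : T.nodeHeight x ≤ ⨆ u : ↥T.nodes.toSet, T.nodeHeight u :=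
      le_ciSup (Ordinal.bddAbove_range.{1,1} _) (⟨x, hx⟩ : ↥T.nodes.toSet)
    rw [hh] at this
    exact absurd (Order.succ_le_iff.mp this) (_root_.lt_irrefl _)
  have hempty : T.level T.height = ∅ := csInf_mem hne
  rcases lt_trichotomy (T.nodeHeight t) T.height with h | h | h
  · exact h
  · exfalso
    have : t ∈ T.level T.height := ⟨(ZFSet.mem_toSet _ _).mpr ht, h⟩
    rw [hempty] at this; exact this
  · exfalso
    obtain ⟨s, hs, hsh⟩ := exists_pred_height ht h
    have : s ∈ T.level T.height :=
      ⟨(ZFSet.mem_toSet _ _).mpr (mem_nodes_of_lt_left hs), hsh⟩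
    rw [hempty] at this; exact this

end ZFTree

end Aux

/-- Let `κ` be a regular cardinal with `κ^{<κ} = κ`.  If
`GMP_{κ⁺⁺}(κ⁺⁺)` holds, then the weak Kurepa Hypothesis `wKH(κ⁺)` fails:
every tree of height `κ⁺` and cardinality `κ⁺` has at most `κ⁺` many cofinal
branches. -/
theorem GMP_implies_no_weakKurepa (κ : Cardinal.{1}) (hreg : κ.IsRegular)
    (hpow : κ ^< κ = κ)
    (hgmp : GMP κ (Order.succ (Order.succ κ))) :
    ∀ T : ZFTree, T.height = (Order.succ κ).ord → #↥T.nodes.toSet = Order.succ κ →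
      #{ b : ZFSet.{0} | T.IsCofinalBranch b.toSet } ≤ Order.succ κ := by
  classical
  intro T hT hTc
  set μ := Order.succ (Order.succ κ) with hμdef
  have hκinf : ℵ₀ ≤ κ := hreg.aleph0_le
  have hsinf : ℵ₀ ≤ Order.succ κ := hκinf.trans (Order.le_succ κ)
  have hμreg : μ.IsRegular := Cardinal.isRegular_succ hsinf
  have hμinf : ℵ₀ ≤ μ := hμreg.aleph0_le
  have hsltμ : Order.succ κ < μ := Order.lt_succ _
  have hθord : Order.IsSuccLimit ((Order.succ κ).ord) := Cardinal.isSuccLimit_ord hsinf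
  have hcof : (Order.succ κ).ord.cof = Order.succ κ := (Cardinal.isRegular_succ hκinf).cof_eq
  -- the coding target `A`, a ZF-set of size `κ⁺` with small transitive closure
  haveI : Small.{0} ↥T.nodes.toSet := ZFSet.small_coe T.nodes
  set c₀ : Cardinal.{0} := #(Shrink.{0} ↥T.nodes.toSet) with hc₀def
  have hc₀ : Cardinal.lift.{1} c₀ = Order.succ κ := by
    rw [← hTc]
    exact (Cardinal.lift_mk_eq'.mpr ⟨(equivShrink _).symm⟩).trans (Cardinal.lift_id'.{0,1} _)
  set A : ZFSet.{0} := vn c₀.ord with hAdef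
  have hAcard : #↥A.toSet = Order.succ κ := by
    rw [hAdef, mk_toSet_vn, Cardinal.card_ord, hc₀]
  have hAtrans : ∀ y ∈ A, ∀ z ∈ y, z ∈ A := fun y hy z hz => vn_transitive hy z hz
  have hAH : A ∈ HSet μ := mem_HSet_of_transitive hAtrans (hAcard ▸ hsltμ)
  obtain ⟨g⟩ : Nonempty (↥T.nodes.toSet ≃ ↥A.toSet) :=
    Cardinal.eq.mp (hTc.trans hAcard.symm)
  -- transported predecessor sets and transported branches
  set P : ZFSet.{0} → ZFSet.{0} := fun t => ZFSet.sep
    (fun a => ∃ ha : a ∈ A.toSet, T.Lt ((g.symm ⟨a, ha⟩ : ↥T.nodes.toSet) : ZFSet.{0}) t) A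
    with hPdef
  set d : ZFSet.{0} → ZFSet.{0} := fun b => ZFSet.sep
    (fun a => ∃ ha : a ∈ A.toSet, ((g.symm ⟨a, ha⟩ : ↥T.nodes.toSet) : ZFSet.{0}) ∈ b) A
    with hddef
  -- the fixed small set that our guessing model must contain
  set F : Set ZFSet.{0} := A.toSet ∪ {A} ∪ (P '' T.nodes.toSet) with hFdef
  have hFH : F ⊆ HSet μ := by
    rintro x ((hx | hx) | ⟨t, ht, rfl⟩)
    · exact mem_HSet_of_mem hAH ((ZFSet.mem_toSet _ _).mp hx)
    · rw [Set.mem_singleton_iff] at hx; subst hx; exact hAH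
    · exact mem_HSet_of_subset (fun u hu => (ZFSet.mem_sep.mp hu).1) hAH
  have hFcard : #↥F < μ := by
    have h1 : #↥F ≤ #↥(A.toSet ∪ ({A} : Set ZFSet.{0})) + #↥(P '' T.nodes.toSet) :=
      Cardinal.mk_union_le _ _
    have h2 : #↥(A.toSet ∪ ({A} : Set ZFSet.{0})) ≤ #↥A.toSet + #↥({A} : Set ZFSet.{0}) :=
      Cardinal.mk_union_le _ _
    refine lt_of_le_of_lt h1 (Cardinal.add_lt_of_lt hμinf ?_ ?_)
    · refine lt_of_le_of_lt h2 (Cardinal.add_lt_of_lt hμinf (hAcard ▸ hsltμ) ?_)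
      rw [Cardinal.mk_singleton]
      exact lt_of_lt_of_le Cardinal.one_lt_aleph0 hμinf
    · exact lt_of_le_of_lt Cardinal.mk_image_le (hTc ▸ hsltμ)
  -- the club of small subsets of `H(μ)` containing `F`
  set C : Set (Set ZFSet.{0}) := {Y | Y ∈ smallSubsets μ (HSet μ) ∧ F ⊆ Y} with hCdef
  have hclub : IsClubIn μ (HSet μ) C := by
    refine ⟨fun Y hY => hY.1, ?_, ?_⟩
    · intro a ha
      refine ⟨a ∪ F, ⟨⟨Set.union_subset ha.1 hFH, ?_⟩, Set.subset_union_right⟩,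
        Set.subset_union_left⟩
      exact lt_of_le_of_lt (Cardinal.mk_union_le _ _) (Cardinal.add_lt_of_lt hμinf ha.2 hFcard)
    · intro δ hδ hδc f hf hmono
      refine ⟨⟨Set.iUnion₂_subset fun i hi => ((hf i hi).1).1, ?_⟩, ?_⟩
      · -- cardinality of the union
        have hre : (⋃ i ∈ Set.Iio δ, f i) =
            ⋃ j : δ.ToType, f (((Ordinal.ToType.mk (o := δ)).symm j) : Ordinal.{1}) := by
          ext u
          simp only [Set.mem_iUnion, Set.mem_Iio, exists_prop]
          constructor
          · rintro ⟨i, hi, hu⟩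
            refine ⟨Ordinal.ToType.mk (o := δ) ⟨i, hi⟩, ?_⟩
            simpa using hu
          · rintro ⟨j, hu⟩
            exact ⟨_, ((Ordinal.ToType.mk (o := δ)).symm j).2, hu⟩
        rw [hre]
        refine lt_of_le_of_lt (Cardinal.mk_iUnion_le _) ?_
        refine Cardinal.mul_lt_of_lt hμinf ?_ ?_
        · rw [Cardinal.mk_toType]; exact hδc
        · refine Cardinal.iSup_lt_of_isRegular hμreg ?_ ?_
          · rw [Cardinal.mk_toType]; exact hδc
          · exact fun j => ((hf _ ((Ordinal.ToType.mk (o := δ)).symm j).2).1).2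
      · -- `F` is contained in the union
        exact ((hf 0 hδ).2).trans
          (Set.subset_biUnion_of_mem (show (0 : Ordinal.{1}) ∈ Set.Iio δ from hδ))
  replace hgmp : IsStationaryIn μ (HSet μ)
      {M | M ∈ smallSubsets μ (HSet μ) ∧ IsGuessingModel κ μ M} := hgmp
  obtain ⟨M, hM⟩ := hgmp.2 C hclub
  have hg : IsGuessingModel κ μ M := hM.1.2
  have hFM : F ⊆ M := hM.2.2
  have hAM : A ∈ M := hFM (Or.inl (Or.inr rfl))
  have hAsubM : A.toSet ⊆ M := fun u hu => hFM (Or.inl (Or.inl hu))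
  have hPM : ∀ t, t ∈ T.nodes → P t ∈ M := fun t ht =>
    hFM (Or.inr ⟨t, (ZFSet.mem_toSet _ _).mpr ht, rfl⟩)
  -- every cofinal branch is guessed
  have key : ∀ b : ZFSet.{0}, T.IsCofinalBranch b.toSet → ∃ e ∈ M, e.toSet ∩ M = (d b).toSet := by
    intro b hb
    have hdsub : d b ⊆ A := ZFSet.subset_def.mpr fun u hu => (ZFSet.mem_sep.mp hu).1
    have happrox : IsApproximated κ M (d b) := by
      intro z hzM hzsub hzc
      -- heights of the nodes corresponding to `d b ∩ z` are bounded
      have hIA : ∀ u : ↥(d b ∩ z).toSet, (u : ZFSet.{0}) ∈ A.toSet := fun u =>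
        (ZFSet.mem_toSet _ _).mpr
          (ZFSet.mem_sep.mp (ZFSet.mem_inter.mp ((ZFSet.mem_toSet _ _).mp u.2)).1).1
      set nd : ↥(d b ∩ z).toSet → ZFSet.{0} :=
        fun u => ((g.symm ⟨u.1, hIA u⟩ : ↥T.nodes.toSet) : ZFSet.{0}) with hnddef
      have hndn : ∀ u, nd u ∈ T.nodes := fun u => (ZFSet.mem_toSet _ _).mp (g.symm _).2
      set γ₀ := ⨆ u : ↥(d b ∩ z).toSet, T.nodeHeight (nd u) with hγ₀def
      have hγ₀lt : γ₀ < (Order.succ κ).ord := by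
        apply Ordinal.iSup_lt_ord
        · rw [hcof]
          refine lt_of_le_of_lt (Cardinal.mk_le_mk_of_subset ?_) (lt_of_le_of_lt hzc (Order.lt_succ κ))
          · intro u hu
            exact (ZFSet.mem_toSet _ _).mpr (ZFSet.mem_inter.mp ((ZFSet.mem_toSet _ _).mp hu)).2
        · intro u
          rw [← hT]
          exact ZFTree.nodeHeight_lt_height (hndn u)
      have hγlt : Order.succ γ₀ < (Order.succ κ).ord := hθord.succ_lt hγ₀lt
      obtain ⟨t, htb, hth⟩ := hb.2.2 (Order.succ γ₀) (by rw [hT]; exact hγlt)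
      have htn : t ∈ T.nodes := (ZFSet.mem_toSet _ _).mp (hb.1 htb)
      have heq : d b ∩ z = z ∩ P t := by
        apply ZFSet.ext; intro u
        rw [ZFSet.mem_inter, ZFSet.mem_inter]
        constructor
        · rintro ⟨hud, huz⟩
          refine ⟨huz, ?_⟩
          obtain ⟨huA, ha, hmem⟩ := ZFSet.mem_sep.mp hud
          have hsb : ((g.symm ⟨u, ha⟩ : ↥T.nodes.toSet) : ZFSet.{0}) ∈ b.toSet :=
            (ZFSet.mem_toSet _ _).mpr hmem
          have hsI : T.nodeHeight ((g.symm ⟨u, ha⟩ : ↥T.nodes.toSet) : ZFSet.{0}) ≤ γ₀ := by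
            have hu' : u ∈ (d b ∩ z).toSet :=
              (ZFSet.mem_toSet _ _).mpr (ZFSet.mem_inter.mpr ⟨hud, huz⟩)
            exact le_ciSup (Ordinal.bddAbove_range.{1,1} _) (⟨u, hu'⟩ : ↥(d b ∩ z).toSet)
          have hsne : ((g.symm ⟨u, ha⟩ : ↥T.nodes.toSet) : ZFSet.{0}) ≠ t := by
            intro h
            rw [h, hth] at hsI
            exact absurd hsI (Order.lt_succ γ₀).not_ge
          rcases hb.2.1 _ hsb t htb hsne with h | h
          · exact ZFSet.mem_sep.mpr ⟨huA, ha, h⟩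
          · exfalso
            have hlt2 := ZFTree.nodeHeight_lt_of_lt
              ((ZFSet.mem_toSet _ _).mp (g.symm (⟨u, ha⟩ : ↥A.toSet)).2) h
            rw [hth] at hlt2
            exact absurd (le_trans hlt2.le hsI) (Order.lt_succ γ₀).not_ge
        · rintro ⟨huz, huP⟩
          obtain ⟨huA, ha, hlt⟩ := ZFSet.mem_sep.mp huP
          have hsn : ((g.symm ⟨u, ha⟩ : ↥T.nodes.toSet) : ZFSet.{0}) ∈ T.nodes :=
            (ZFSet.mem_toSet _ _).mp (g.symm _).2
          have hβ : T.nodeHeight ((g.symm ⟨u, ha⟩ : ↥T.nodes.toSet) : ZFSet.{0}) <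
              Order.succ γ₀ := hth ▸ ZFTree.nodeHeight_lt_of_lt htn hlt
          obtain ⟨s', hs'b, hs'h⟩ := hb.2.2
            (T.nodeHeight ((g.symm ⟨u, ha⟩ : ↥T.nodes.toSet) : ZFSet.{0}))
            (by rw [hT]; exact hβ.trans hγlt)
          have hs'n : s' ∈ T.nodes := (ZFSet.mem_toSet _ _).mp (hb.1 hs'b)
          have hs'ne : s' ≠ t := by
            intro h
            rw [h, hth] at hs'h
            rw [← hs'h] at hβ
            exact absurd hβ (_root_.lt_irrefl _)
          have hs't : T.Lt s' t := by
            rcases hb.2.1 s' hs'b t htb hs'ne with h | h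
            · exact h
            · exfalso
              have hlt2 := ZFTree.nodeHeight_lt_of_lt hs'n h
              rw [hth, hs'h] at hlt2
              exact absurd (hlt2.trans hβ) (_root_.lt_irrefl _)
          haveI := ZFTree.predWO (T := T) htn
          rcases @trichotomous _ (fun a b : {x : ZFSet.{0} // T.Lt x t} => T.Lt a.1 b.1) _
            ⟨_, hlt⟩ ⟨s', hs't⟩ with h | h | h
          · exfalso
            have hlt2 := ZFTree.nodeHeight_lt_of_lt hs'n h
            rw [hs'h] at hlt2
            exact absurd hlt2 (_root_.lt_irrefl _)
          · have hss' : ((g.symm ⟨u, ha⟩ : ↥T.nodes.toSet) : ZFSet.{0}) = s' :=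
              congrArg Subtype.val h
            refine ⟨ZFSet.mem_sep.mpr ⟨huA, ha, ?_⟩, huz⟩
            rw [hss']
            exact (ZFSet.mem_toSet _ _).mp hs'b
          · exfalso
            have hlt2 := ZFTree.nodeHeight_lt_of_lt hsn h
            rw [hs'h] at hlt2
            exact absurd hlt2 (_root_.lt_irrefl _)
      rw [heq]
      exact inter_mem_of_elem hg.elem hzM (hPM t htn)
    obtain ⟨e, heM, hee⟩ := hg.guess A hAM (d b) hdsub happrox
    refine ⟨e, heM, ?_⟩
    rw [hee]
    refine Set.inter_eq_left.mpr fun u hu => hAsubM ?_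
    exact (ZFSet.mem_toSet _ _).mpr (hdsub ((ZFSet.mem_toSet _ _).mp hu))
  -- conclude: branches inject into `M`
  choose e heM hee using key
  have hdinj : ∀ (b₁ b₂ : ZFSet.{0}), T.IsCofinalBranch b₁.toSet → d b₁ = d b₂ →
      ∀ u, u ∈ b₁ → u ∈ b₂ := by
    intro b₁ b₂ h₁ hd12 u hu
    have hun : u ∈ T.nodes.toSet := h₁.1 ((ZFSet.mem_toSet _ _).mpr hu)
    have ha : ((g ⟨u, hun⟩ : ↥A.toSet) : ZFSet.{0}) ∈ d b₁ := by
      refine ZFSet.mem_sep.mpr ⟨(ZFSet.mem_toSet _ _).mp (g ⟨u, hun⟩).2, (g ⟨u, hun⟩).2, ?_⟩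
      rw [Subtype.coe_eta, Equiv.symm_apply_apply]
      exact hu
    rw [hd12] at ha
    obtain ⟨-, ha', hmem⟩ := ZFSet.mem_sep.mp ha
    rw [Subtype.coe_eta, Equiv.symm_apply_apply] at hmem
    exact hmem
  refine le_trans (Cardinal.mk_le_of_injective
    (f := fun b : { b : ZFSet.{0} | T.IsCofinalBranch b.toSet } =>
      (⟨e b.1 b.2, heM b.1 b.2⟩ : ↥M)) ?_) (le_of_eq hg.card)
  rintro ⟨b, hb⟩ ⟨b', hb'⟩ hbe
  have he' : e b hb = e b' hb' := congrArg Subtype.val hbe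
  have hdd : d b = d b' := by
    apply ZFSet.toSet_injective
    rw [← hee b hb, ← hee b' hb', he']
  refine Subtype.ext (ZFSet.ext fun u => ⟨fun hu => hdinj b b' hb hdd u hu,
    fun hu => hdinj b' b hb' hdd.symm u hu⟩)
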